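/- The twisted representation R̄ of the loop braid group respects the mixed relations VII and VIII: for each 1 ≤ i ≤ n−2, N_i(a∘(τ_i∘τ_{i+1})) · P_{i+1} · P_i = P_{i+1} · P_i · N_{i+1}(a) and P_i · N_{i+1}(a∘τ_i) · N_i(a) = N_{i+1}(a∘(τ_{i+1}∘τ_i)) · N_i(a∘τ_{i+1}) · P_{i+1} as n×n matrices over A. -/

import Mathlib

/-- 1-based access to the tuple `a = (a_1, …, a_n)`: `aval n a j = a_j` for
`1 ≤ j ≤ n` (junk value `0` out of range). -/
def aval {A : Type*} [CommRing A] (n : ℕ) (a : Fin n → A) (j : ℕ) : A :=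
  if h : j - 1 < n then a ⟨j - 1, h⟩ else 0

/-- The twisted Burau matrix `M_i(a) = R(σ_i)` (`i` 1-based): it agrees with the
identity matrix except that its `2×2` submatrix in rows and columns `i, i+1` equals
`[[1−a_{i+1}, a_i], [1, 0]]`. -/
def twistM (A : Type*) [CommRing A] (n : ℕ) (a : Fin n → A) (i : ℕ) :
    Matrix (Fin n) (Fin n) A :=
  Matrix.of fun k l =>
    if (k : ℕ) + 1 = i ∧ (l : ℕ) + 1 = i then 1 - aval n a (i + 1)
    else if (k : ℕ) + 1 = i ∧ (l : ℕ) = i then aval n a i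
    else if (k : ℕ) = i ∧ (l : ℕ) + 1 = i then 1
    else if (k : ℕ) = i ∧ (l : ℕ) = i then 0
    else if k = l then 1 else 0

/-- The matrix `N_i(a) = R̄(σ_i)` (`i` 1-based): it agrees with the identity matrix
except that its `2×2` submatrix in rows and columns `i, i+1` equals
`[[0, a_i], [1, 1−a_i]]`. -/
def twistN (A : Type*) [CommRing A] (n : ℕ) (a : Fin n → A) (i : ℕ) :
    Matrix (Fin n) (Fin n) A :=
  Matrix.of fun k l =>
    if (k : ℕ) + 1 = i ∧ (l : ℕ) + 1 = i then 0
    else if (k : ℕ) + 1 = i ∧ (l : ℕ) = i then aval n a i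
    else if (k : ℕ) = i ∧ (l : ℕ) + 1 = i then 1
    else if (k : ℕ) = i ∧ (l : ℕ) = i then 1 - aval n a i
    else if k = l then 1 else 0

/-- The `n×n` permutation matrix `P_i` (`i` 1-based): it agrees with the identity
matrix except that its `2×2` submatrix in rows and columns `i, i+1` equals
`[[0, 1], [1, 0]]`. -/
def permM (A : Type*) [CommRing A] (n : ℕ) (i : ℕ) : Matrix (Fin n) (Fin n) A :=
  Matrix.of fun k l =>
    if (k : ℕ) + 1 = i ∧ (l : ℕ) + 1 = i then 0
    else if (k : ℕ) + 1 = i ∧ (l : ℕ) = i then 1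
    else if (k : ℕ) = i ∧ (l : ℕ) + 1 = i then 1
    else if (k : ℕ) = i ∧ (l : ℕ) = i then 0
    else if k = l then 1 else 0

/-- The transposition `τ_j` of `{1, …, n}` swapping `j` and `j+1` (1-based), as a
permutation of `Fin n` (junk value `1` out of range). -/
def tau (n j : ℕ) : Equiv.Perm (Fin n) :=
  if h : 1 ≤ j ∧ j < n then Equiv.swap ⟨j - 1, by omega⟩ ⟨j, h.2⟩ else 1

/-- The twisted representation `R̄` of the loop braid group respects the mixed
relations VII and VIII: for each `1 ≤ i ≤ n−2`,
`N_i(a∘(τ_i∘τ_{i+1})) · P_{i+1} · P_i = P_{i+1} · P_i · N_{i+1}(a)` and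
`P_i · N_{i+1}(a∘τ_i) · N_i(a) = N_{i+1}(a∘(τ_{i+1}∘τ_i)) · N_i(a∘τ_{i+1}) · P_{i+1}`
as `n×n` matrices over `A`. -/
theorem aval_pos {A : Type*} [CommRing A] {n : ℕ} (b : Fin n → A) (j : ℕ)
    (h : j - 1 < n) : aval n b j = b ⟨j - 1, h⟩ := dif_pos h

theorem tau_pos {n j : ℕ} (h1 : 1 ≤ j) (h2 : j < n) :
    tau n j = Equiv.swap ⟨j - 1, by omega⟩ ⟨j, h2⟩ := dif_pos ⟨h1, h2⟩

theorem twistN_eq' {A : Type*} [CommRing A] {n i : ℕ} (h1 : 1 ≤ i) (h2 : i < n)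
    (a : Fin n → A) :
    twistN A n a i = 1 - Matrix.single ⟨i-1, by omega⟩ ⟨i-1, by omega⟩ (1:A)
      + aval n a i • Matrix.single ⟨i-1, by omega⟩ ⟨i, h2⟩ 1
      + Matrix.single ⟨i, h2⟩ ⟨i-1, by omega⟩ 1
      - aval n a i • Matrix.single ⟨i, h2⟩ ⟨i, h2⟩ 1 := by
  ext k l
  simp only [twistN, Matrix.of_apply, Matrix.sub_apply, Matrix.add_apply,
    Matrix.one_apply, Matrix.smul_apply, Matrix.single, smul_eq_mul,
    Fin.mk.injEq, Fin.ext_iff]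
  split_ifs <;> first | (exfalso; omega) | ring1

theorem permM_eq' {A : Type*} [CommRing A] {n i : ℕ} (h1 : 1 ≤ i) (h2 : i < n) :
    permM A n i = 1 - Matrix.single ⟨i-1, by omega⟩ ⟨i-1, by omega⟩ (1:A)
      + Matrix.single ⟨i-1, by omega⟩ ⟨i, h2⟩ 1
      + Matrix.single ⟨i, h2⟩ ⟨i-1, by omega⟩ 1
      - Matrix.single ⟨i, h2⟩ ⟨i, h2⟩ 1 := by
  ext k l
  simp only [permM, Matrix.of_apply, Matrix.sub_apply, Matrix.add_apply,
    Matrix.one_apply, Matrix.single, Fin.mk.injEq, Fin.ext_iff]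
  split_ifs <;> first | (exfalso; omega) | ring1

open Matrix in
theorem key1 {A : Type*} [CommRing A] {n : ℕ} (p q r : Fin n)
    (hpq : p ≠ q) (hqr : q ≠ r) (hpr : p ≠ r) (y : A) :
    (1 - single p p (1:A) + y • single p q 1 + single q p 1
        - y • single q q 1) *
      (1 - single q q 1 + single q r 1 + single r q 1
        - single r r 1) *
      (1 - single p p 1 + single p q 1 + single q p 1
        - single q q 1) =
    (1 - single q q 1 + single q r 1 + single r q 1
        - single r r 1) *
      (1 - single p p 1 + single p q 1 + single q p 1
        - single q q 1) *
      (1 - single q q (1:A) + y • single q r 1 + single r q 1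
        - y • single r r 1) := by
  simp only [sub_mul, mul_sub, add_mul, mul_add, Matrix.smul_mul, Matrix.mul_smul,
    one_mul, mul_one, Matrix.single_mul_single_same, Matrix.single_mul_single_of_ne, hpq, hqr, hpr,
    hpq.symm, hqr.symm, hpr.symm, ne_eq, not_false_eq_true, smul_zero]
  module

open Matrix in
theorem key2 {A : Type*} [CommRing A] {n : ℕ} (p q r : Fin n)
    (hpq : p ≠ q) (hqr : q ≠ r) (hpr : p ≠ r) (x : A) :
    (1 - single p p (1:A) + single p q 1 + single q p 1
        - single q q 1) *
      (1 - single q q 1 + x • single q r 1 + single r q 1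
        - x • single r r 1) *
      (1 - single p p 1 + x • single p q 1 + single q p 1
        - x • single q q 1) =
    (1 - single q q 1 + x • single q r 1 + single r q 1
        - x • single r r 1) *
      (1 - single p p 1 + x • single p q 1 + single q p 1
        - x • single q q 1) *
      (1 - single q q (1:A) + single q r 1 + single r q 1
        - single r r 1) := by
  simp only [sub_mul, mul_sub, add_mul, mul_add, Matrix.smul_mul, Matrix.mul_smul,
    one_mul, mul_one, Matrix.single_mul_single_same, Matrix.single_mul_single_of_ne, hpq, hqr, hpr,
    hpq.symm, hqr.symm, hpr.symm, ne_eq, not_false_eq_true, smul_zero, smul_smul]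
  module

theorem statement17 (A : Type*) [CommRing A] (n : ℕ) (hn : 3 ≤ n) (a : Fin n → A)
    (i : ℕ) (hi1 : 1 ≤ i) (hi2 : i ≤ n - 2) :
    (twistN A n (a ∘ (⇑(tau n i) ∘ ⇑(tau n (i + 1)))) i * permM A n (i + 1) *
        permM A n i =
      permM A n (i + 1) * permM A n i * twistN A n a (i + 1)) ∧
    (permM A n i * twistN A n (a ∘ ⇑(tau n i)) (i + 1) * twistN A n a i =
      twistN A n (a ∘ (⇑(tau n (i + 1)) ∘ ⇑(tau n i))) (i + 1) *
        twistN A n (a ∘ ⇑(tau n (i + 1))) i * permM A n (i + 1)) := by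
  have hin : i < n := by omega
  have hin1 : i + 1 < n := by omega
  have hp : i - 1 < n := by omega
  set p : Fin n := ⟨i - 1, hp⟩ with hpdef
  set q : Fin n := ⟨i, hin⟩ with hqdef
  set r : Fin n := ⟨i + 1, hin1⟩ with hrdef
  have hpq : p ≠ q := by simp only [hpdef, hqdef, ne_eq, Fin.mk.injEq]; omega
  have hqr : q ≠ r := by simp only [hqdef, hrdef, ne_eq, Fin.mk.injEq]; omega
  have hpr : p ≠ r := by simp only [hpdef, hrdef, ne_eq, Fin.mk.injEq]; omega
  have hti : tau n i = Equiv.swap p q := tau_pos hi1 hin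
  have hti1 : tau n (i + 1) = Equiv.swap q r := by
    rw [tau_pos (by omega) hin1]
    rfl
  have hq1 : i + 1 - 1 < n := by omega
  have havq : ∀ b : Fin n → A, aval n b (i + 1) = b q := fun b => by
    rw [aval_pos b (i + 1) hq1]
    rfl
  have havp : ∀ b : Fin n → A, aval n b i = b p := fun b => aval_pos b i hp
  -- scalar computations
  have e1 : aval n (a ∘ (⇑(tau n i) ∘ ⇑(tau n (i + 1)))) i = a q := by
    rw [havp, Function.comp_apply, Function.comp_apply, hti, hti1,
      Equiv.swap_apply_of_ne_of_ne hpq hpr, Equiv.swap_apply_left]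
  have e2 : aval n a (i + 1) = a q := havq a
  have e3 : aval n (a ∘ ⇑(tau n i)) (i + 1) = a p := by
    rw [havq, Function.comp_apply, hti, Equiv.swap_apply_right]
  have e4 : aval n a i = a p := havp a
  have e5 : aval n (a ∘ (⇑(tau n (i + 1)) ∘ ⇑(tau n i))) (i + 1) = a p := by
    rw [havq, Function.comp_apply, Function.comp_apply, hti, hti1,
      Equiv.swap_apply_right, Equiv.swap_apply_of_ne_of_ne hpq hpr]
  have e6 : aval n (a ∘ ⇑(tau n (i + 1))) i = a p := by
    rw [havp, Function.comp_apply, hti1,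
      Equiv.swap_apply_of_ne_of_ne hpq hpr]
  have hN : ∀ b : Fin n → A, twistN A n b i
      = 1 - Matrix.single p p (1:A) + aval n b i • Matrix.single p q 1
        + Matrix.single q p 1 - aval n b i • Matrix.single q q 1 :=
    fun b => twistN_eq' hi1 hin b
  have hN1 : ∀ b : Fin n → A, twistN A n b (i + 1)
      = 1 - Matrix.single q q (1:A)
        + aval n b (i + 1) • Matrix.single q r 1
        + Matrix.single r q 1
        - aval n b (i + 1) • Matrix.single r r 1 := fun b => by
    rw [twistN_eq' (by omega) hin1 b]
    have : (⟨i + 1 - 1, by omega⟩ : Fin n) = q := by simp [hqdef, Fin.ext_iff]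
    rw [this]
  have hP : permM A n i
      = 1 - Matrix.single p p (1:A) + Matrix.single p q 1
        + Matrix.single q p 1 - Matrix.single q q 1 :=
    permM_eq' hi1 hin
  have hP1 : permM A n (i + 1)
      = 1 - Matrix.single q q (1:A) + Matrix.single q r 1
        + Matrix.single r q 1 - Matrix.single r r 1 := by
    rw [permM_eq' (by omega) hin1]
    have : (⟨i + 1 - 1, by omega⟩ : Fin n) = q := by simp [hqdef, Fin.ext_iff]
    rw [this]
  constructor
  · rw [hN, hP, hP1, hN1, e1, e2]
    exact key1 p q r hpq hqr hpr (a q)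
  · rw [hP, hP1, hN, hN, hN1, hN1, e3, e4, e5, e6]
    exact key2 p q r hpq hqr hpr (a p)
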